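/- Let q be a prime power and l = st for positive integers s, t. Then R_{q^{st}/q} = R_{q^{st}/q^t} · R_{q^t/q} as subsets (the product set equals the set, with each element of R_{q^{st}/q} uniquely a product), where R_{Q/q'} = {x ∈ 𝔽_Q^* : tr_{Q/q'}(x) = 1}. Equivalently, in ℤ[𝔽_{q^{st}}^*], the group ring product R_{q^{st}/q^t} · R_{q^t/q} equals R_{q^{st}/q}. -/
import Mathlib


open Finset

/-- The formal sum `∑_{x ∈ s} x` of a finite subset of a group in the
integral group ring `ℤ[G]`. -/
noncomputable def fsum {G : Type*} [Group G] [DecidableEq G] (s : Finset G) :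
    MonoidAlgebra ℤ G :=
  ∑ x ∈ s, MonoidAlgebra.single x 1

/-- The relative trace `x ↦ ∑_{i<l} x^{c^i}`. -/
def relTrace {F : Type*} [CommRing F] (c l : ℕ) (x : F) : F :=
  ∑ i ∈ Finset.range l, x ^ c ^ i

/-- with `𝔽_q ⊆ 𝔽_{q^t} ⊆ 𝔽_{q^{st}}`, the group ring product
`R_{q^{st}/q^t} · R_{q^t/q}` equals `R_{q^{st}/q}` in `ℤ[𝔽_{q^{st}}^*]`, where
`R_{Q/q'} = {x : tr_{Q/q'}(x) = 1}` and `R_{q^t/q}` is viewed inside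
`𝔽_{q^{st}}^*` via the embedding. -/
theorem stmt10 {K L F : Type*} [Field K] [Field L] [Field F]
    [Fintype K] [Fintype L] [Fintype F] [DecidableEq F] [DecidableEq L]
    [Algebra K L] [Algebra L F] [Algebra K F] [IsScalarTower K L F]
    (q s t : ℕ) (hq : Fintype.card K = q) (hL : Fintype.card L = q ^ t)
    (hF : Fintype.card F = q ^ (s * t)) (hs : 1 ≤ s) (ht : 1 ≤ t) :
    fsum ((univ : Finset Fˣ).filter
        (fun x : Fˣ => relTrace (q ^ t) s (x : F) = 1)) *
      fsum (((univ : Finset Lˣ).filter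
          (fun y : Lˣ => relTrace q t (y : L) = 1)).image
        (Units.map (algebraMap L F : L →+* F).toMonoidHom)) =
    fsum ((univ : Finset Fˣ).filter
      (fun x : Fˣ => relTrace q (s * t) (x : F) = 1)) := by
  classical
  -- characteristic setup
  set p := ringChar K with hpdef
  haveI : CharP K p := ringChar.charP K
  obtain ⟨n, hp, hqn⟩ := FiniteField.card K p
  rw [hq] at hqn
  haveI hpF : Fact p.Prime := ⟨hp⟩
  have hq2 : 2 ≤ q := hq ▸ Fintype.one_lt_card
  haveI : CharP F p := charP_of_injective_ringHom (algebraMap K F).injective p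
  haveI : ExpChar F p := ExpChar.prime hp
  set e : L →+* F := algebraMap L F with hedef
  have eInj : Function.Injective e := e.injective
  set um := Units.map ((algebraMap L F : L →+* F)).toMonoidHom with humdef
  have umInj : Function.Injective um := Units.map_injective eInj
  have humcoe : ∀ y : Lˣ, ((um y : Fˣ) : F) = e (y : L) := fun y => rfl
  -- Frobenius-type facts
  have hfrob : ∀ (m : ℕ) (r : Finset ℕ) (g : ℕ → F),
      (∑ i ∈ r, g i) ^ q ^ m = ∑ i ∈ r, g i ^ q ^ m := by
    intro m r g
    have h := map_sum (iterateFrobenius F p ((n : ℕ) * m)) g r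
    simp only [iterateFrobenius_def, pow_mul, ← hqn] at h
    exact h
  have hyfix : ∀ (y : L) (i : ℕ), y ^ (q ^ t) ^ i = y := by
    intro y i
    induction i with
    | zero => simp
    | succ i ih => rw [pow_succ, pow_mul, ih, ← hL, FiniteField.pow_card]
  have heyfix : ∀ (y : L) (i : ℕ), e y ^ (q ^ t) ^ i = e y := by
    intro y i; rw [← map_pow, hyfix]
  -- trace of a product with an element of `L`
  have h5 : ∀ (x : F) (y : L),
      relTrace (q ^ t) s (x * e y) = e y * relTrace (q ^ t) s x := by
    intro x y
    unfold relTrace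
    rw [Finset.mul_sum]
    refine Finset.sum_congr rfl fun i _ => ?_
    rw [mul_pow, heyfix, mul_comm]
  -- the relative trace is fixed by the `q^t` Frobenius
  have h1 : ∀ z : F, relTrace (q ^ t) s z ^ q ^ t = relTrace (q ^ t) s z := by
    intro z
    have hz : z ^ (q ^ t) ^ s = z := by
      rw [← pow_mul, mul_comm t s, ← hF, FiniteField.pow_card]
    unfold relTrace
    rw [hfrob t]
    have hterm : ∀ i : ℕ, (z ^ (q ^ t) ^ i) ^ q ^ t = z ^ (q ^ t) ^ (i + 1) := by
      intro i; rw [← pow_mul, ← pow_succ]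
    simp only [hterm]
    have h0 := Finset.sum_range_succ' (fun i => z ^ (q ^ t) ^ i) s
    have h1' := Finset.sum_range_succ (fun i => z ^ (q ^ t) ^ i) s
    have hgs : z ^ (q ^ t) ^ s = z ^ (q ^ t) ^ 0 := by rw [hz, pow_zero, pow_one]
    rw [h1', hgs, pow_zero, pow_one] at h0
    exact (add_right_cancel h0).symm
  -- transitivity decomposition of the big trace
  have hA : ∀ z : F,
      relTrace q (s * t) z = ∑ b ∈ Finset.range t, relTrace (q ^ t) s z ^ q ^ b := by
    intro z
    unfold relTrace
    have hterm : ∀ b a : ℕ, (z ^ (q ^ t) ^ a) ^ q ^ b = z ^ q ^ (a * t + b) := by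
      intro b a
      rw [← pow_mul, ← pow_mul, ← pow_add, mul_comm t a]
    calc ∑ i ∈ Finset.range (s * t), z ^ q ^ i
        = ∑ x ∈ Finset.range t ×ˢ Finset.range s, z ^ q ^ (x.2 * t + x.1) := by
          refine Finset.sum_nbij' (fun i => (i % t, i / t))
            (fun x => x.2 * t + x.1) ?_ ?_ ?_ ?_ ?_
          · intro a ha
            simp only [Finset.mem_range] at ha
            simp only [Finset.mem_product, Finset.mem_range]
            exact ⟨Nat.mod_lt _ (by omega), Nat.div_lt_of_lt_mul (by rw [mul_comm t s]; exact ha)⟩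
          · intro x hx
            simp only [Finset.mem_product, Finset.mem_range] at hx ⊢
            calc x.2 * t + x.1 < x.2 * t + t := by omega
              _ = (x.2 + 1) * t := by ring
              _ ≤ s * t := Nat.mul_le_mul_right t (by omega)
          · intro a _
            simp only
            rw [mul_comm, Nat.div_add_mod]
          · intro x hx
            simp only [Finset.mem_product, Finset.mem_range] at hx
            have hm : (x.2 * t + x.1) % t = x.1 := by
              rw [add_comm, Nat.add_mul_mod_self_right, Nat.mod_eq_of_lt hx.1]
            have hd : (x.2 * t + x.1) / t = x.2 := by
              rw [mul_comm, Nat.mul_add_div (by omega), Nat.div_eq_of_lt hx.1, add_zero]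
            simp [hm, hd]
          · intro a _
            have h : a / t * t + a % t = a := by rw [mul_comm, Nat.div_add_mod]
            simp only [h]
      _ = ∑ b ∈ Finset.range t, ∑ a ∈ Finset.range s, z ^ q ^ (a * t + b) := by
          rw [Finset.sum_product]
      _ = ∑ b ∈ Finset.range t, (∑ a ∈ Finset.range s, z ^ (q ^ t) ^ a) ^ q ^ b := by
          refine Finset.sum_congr rfl fun b _ => ?_
          rw [hfrob b]
          exact Finset.sum_congr rfl fun a _ => (hterm b a).symm
  -- fixed points of the `q^t` Frobenius lie in `L`
  have hfix : ∀ z : F, z ^ q ^ t = z → ∃ y : L, e y = z := by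
    intro z hz
    set S : Finset F := univ.filter (fun w => w ^ q ^ t = w) with hSdef
    set T : Finset F := (univ : Finset L).image e with hTdef
    have hTS : T ⊆ S := by
      intro w hw
      simp only [hTdef, Finset.mem_image, Finset.mem_univ, true_and] at hw
      obtain ⟨y, rfl⟩ := hw
      simp only [hSdef, Finset.mem_filter, Finset.mem_univ, true_and]
      have := heyfix y 1
      rwa [pow_one] at this
    have hcardT : T.card = q ^ t := by
      rw [hTdef, Finset.card_image_of_injective _ eInj, Finset.card_univ, hL]
    have hScard : S.card ≤ q ^ t := by
      set P : Polynomial F := Polynomial.X ^ (q ^ t) - Polynomial.X with hPdef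
      have hqt2 : 2 ≤ q ^ t := le_trans hq2 (Nat.le_self_pow (by omega) q)
      have hP0 : P ≠ 0 := by
        intro h
        have hc : P.coeff (q ^ t) = 1 := by
          rw [hPdef, Polynomial.coeff_sub, Polynomial.coeff_X_pow, Polynomial.coeff_X,
            if_pos rfl, if_neg (by omega)]
          ring
        rw [h, Polynomial.coeff_zero] at hc
        exact one_ne_zero hc.symm
      have hroots : S ⊆ P.roots.toFinset := by
        intro w hw
        simp only [hSdef, Finset.mem_filter, Finset.mem_univ, true_and] at hw
        rw [Multiset.mem_toFinset, Polynomial.mem_roots hP0]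
        simp [hPdef, Polynomial.IsRoot, sub_eq_zero, hw]
      calc S.card ≤ P.roots.toFinset.card := Finset.card_le_card hroots
        _ ≤ Multiset.card P.roots := P.roots.toFinset_card_le
        _ ≤ P.natDegree := P.card_roots'
        _ ≤ q ^ t := by
            refine le_trans (Polynomial.natDegree_sub_le _ _) ?_
            simp only [Polynomial.natDegree_X_pow, Polynomial.natDegree_X]
            omega
    have hST : T = S :=
      Finset.eq_of_subset_of_card_le hTS (by rw [hcardT]; exact hScard)
    have hzS : z ∈ S := by
      simp only [hSdef, Finset.mem_filter, Finset.mem_univ, true_and]; exact hz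
    rw [← hST] at hzS
    simp only [hTdef, Finset.mem_image, Finset.mem_univ, true_and] at hzS
    exact hzS
  -- trace tower: if the middle trace is `e y` then the big trace is `e` of the small trace
  have h4 : ∀ (z : F) (y : L), e y = relTrace (q ^ t) s z →
      relTrace q (s * t) z = e (relTrace q t y) := by
    intro z y hy
    rw [hA z, ← hy]
    unfold relTrace
    rw [map_sum]
    exact Finset.sum_congr rfl fun b _ => by rw [map_pow]
  -- now the main combinatorial identity
  unfold fsum
  rw [Finset.sum_image (fun y _ y' _ h => umInj h)]
  rw [Finset.sum_mul_sum]
  simp only [MonoidAlgebra.single_mul_single, one_mul]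
  rw [← Finset.sum_product']
  refine Finset.sum_bij (fun pr _ => pr.1 * um pr.2) ?_ ?_ ?_ ?_
  · -- maps into the target
    rintro ⟨x, y⟩ hpr
    simp only [Finset.mem_product, Finset.mem_filter, Finset.mem_univ, true_and] at hpr ⊢
    obtain ⟨hx, hy⟩ := hpr
    have hcoe : ((x * um y : Fˣ) : F) = (x : F) * e (y : L) := by
      rw [Units.val_mul, humcoe]
    rw [hcoe]
    have hmid : e (y : L) = relTrace (q ^ t) s ((x : F) * e (y : L)) := by
      rw [h5, hx, mul_one]
    rw [h4 _ _ hmid, hy, map_one]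
  · -- injective
    rintro ⟨x₁, y₁⟩ h₁ ⟨x₂, y₂⟩ h₂ heq
    simp only [Finset.mem_product, Finset.mem_filter, Finset.mem_univ, true_and] at h₁ h₂
    have heqF : (x₁ : F) * e (y₁ : L) = (x₂ : F) * e (y₂ : L) := by
      have := congrArg (Units.val) heq
      rwa [Units.val_mul, Units.val_mul, humcoe, humcoe] at this
    have hy : e (y₁ : L) = e (y₂ : L) := by
      have t₁ : e (y₁ : L) = relTrace (q ^ t) s ((x₁ : F) * e (y₁ : L)) := by
        rw [h5, h₁.1, mul_one]
      have t₂ : e (y₂ : L) = relTrace (q ^ t) s ((x₂ : F) * e (y₂ : L)) := by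
        rw [h5, h₂.1, mul_one]
      rw [t₁, t₂, heqF]
    have hy' : y₁ = y₂ := Units.ext (eInj hy)
    subst hy'
    have hx : x₁ = x₂ := by
      have := mul_right_cancel heq
      exact this
    rw [hx]
  · -- surjective
    intro c hc
    simp only [Finset.mem_filter, Finset.mem_univ, true_and] at hc
    have hu := h1 (c : F)
    obtain ⟨y, hy⟩ := hfix _ hu
    have htr : relTrace q t y = 1 := by
      apply eInj
      rw [map_one, ← h4 _ _ hy, hc]
    have hy0 : y ≠ 0 := by
      intro h0
      rw [h0] at htr
      have : relTrace q t (0 : L) = 0 := by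
        unfold relTrace
        refine Finset.sum_eq_zero fun i _ => ?_
        exact zero_pow (by positivity)
      rw [this] at htr
      exact zero_ne_one htr
    set yu : Lˣ := Units.mk0 y hy0 with hyu
    refine ⟨(c * (um yu)⁻¹, yu), ?_, ?_⟩
    · simp only [Finset.mem_product, Finset.mem_filter, Finset.mem_univ, true_and]
      constructor
      · -- first component has middle trace 1
        have hcoe : ((c * (um yu)⁻¹ : Fˣ) : F) * e y = (c : F) := by
          have : ((um yu : Fˣ) : F) = e y := by rw [humcoe]; rfl
          rw [← this, ← Units.val_mul, inv_mul_cancel_right]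
        have hey0 : e y ≠ 0 := fun h => hy0 (eInj (by rw [h, map_zero]))
        refine mul_left_cancel₀ hey0 ?_
        calc e y * relTrace (q ^ t) s ((c * (um yu)⁻¹ : Fˣ) : F)
            = relTrace (q ^ t) s (((c * (um yu)⁻¹ : Fˣ) : F) * e y) := (h5 _ _).symm
          _ = relTrace (q ^ t) s (c : F) := by rw [hcoe]
          _ = e y * 1 := by rw [mul_one, ← hy]
      · show relTrace q t ((yu : L)) = 1
        rw [hyu]
        exact htr
    · exact inv_mul_cancel_right c (um yu)
  · -- values agree
    rintro ⟨x, y⟩ _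
    rfl
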